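/- arXiv:2412.06971 — 2 statements merged into one kernel-verified Lean document; each statement's English description precedes it below -/
import Mathlib

section
/- Let e1, e2, e3, e4 be distinct non-bridge edges of a connected graph Γ such that {e1,e2}, {e2,e3}, and {e3,e4} are each disconnecting pairs (removing both edges disconnects the graph but removing only one does not). Then {e4,e1} is also a disconnecting pair. -/
/-- A finite (multi)graph: finite vertex and edge types, each edge with an
unordered pair of endpoints. -/
structure FinMultigraph where
  V : Type
  E : Type
  [fintV : Fintype V]
  [fintE : Fintype E]
  ends : E → Sym2 V

namespace FinMultigraph

/-- Adjacency in the graph obtained by deleting the edges in `S`. -/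
def adjOff (G : FinMultigraph) (S : Set G.E) (u v : G.V) : Prop :=
  ∃ e : G.E, e ∉ S ∧ G.ends e = s(u, v)

/-- The graph with the edges in `S` deleted is connected. -/
def connOff (G : FinMultigraph) (S : Set G.E) : Prop :=
  ∀ u v : G.V, Relation.ReflTransGen (G.adjOff S) u v

/-- The graph is connected. -/
def Connected (G : FinMultigraph) : Prop := G.connOff ∅

/-- An edge is a bridge if its removal disconnects the graph. -/
def IsBridge (G : FinMultigraph) (e : G.E) : Prop := ¬ G.connOff {e}

/-- A pair of edges is a disconnecting pair if removing both disconnects the graph. -/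
def DiscPair (G : FinMultigraph) (e f : G.E) : Prop := ¬ G.connOff {e, f}

/-- Number of connected components after deleting the edges in `S`. -/
noncomputable def numComponentsOff (G : FinMultigraph) (S : Set G.E) : ℕ :=
  Nat.card (Quot (G.adjOff S))

end FinMultigraph

namespace FinMultigraph

variable {G : FinMultigraph}

lemma adjOff_symm {S : Set G.E} {u v : G.V} (h : G.adjOff S u v) : G.adjOff S v u := by
  obtain ⟨e, he, hends⟩ := h
  exact ⟨e, he, by rw [hends, Sym2.eq_swap]⟩

lemma rtg_symm {S : Set G.E} {u v : G.V}
    (h : Relation.ReflTransGen (G.adjOff S) u v) :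
    Relation.ReflTransGen (G.adjOff S) v u :=
  (@Relation.ReflTransGen.symmetric _ (G.adjOff S) ⟨fun _ _ h => adjOff_symm h⟩).symm _ _ h

lemma lift {S : Set G.E} {g : G.E} {x y : G.V}
    (hg : G.ends g = s(x, y))
    (hxy : Relation.ReflTransGen (G.adjOff (insert g S)) x y)
    {u v : G.V} (h : Relation.ReflTransGen (G.adjOff S) u v) :
    Relation.ReflTransGen (G.adjOff (insert g S)) u v := by
  induction h with
  | refl => exact .refl
  | tail _ hbc ih =>
    obtain ⟨h, hh, hends⟩ := hbc
    by_cases hge : h = g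
    · subst hge
      rw [hg] at hends
      rcases Sym2.eq_iff.mp hends with ⟨rfl, rfl⟩ | ⟨rfl, rfl⟩
      · exact ih.trans hxy
      · exact ih.trans (rtg_symm hxy)
    · exact ih.tail ⟨h, by simp [hge, hh], hends⟩

lemma reach {S : Set G.E} {g : G.E} {x y : G.V} (hg : G.ends g = s(x, y))
    {u v : G.V} (h : Relation.ReflTransGen (G.adjOff S) u v) :
    Relation.ReflTransGen (G.adjOff (insert g S)) u v ∨
    Relation.ReflTransGen (G.adjOff (insert g S)) x v ∨
    Relation.ReflTransGen (G.adjOff (insert g S)) y v := by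
  induction h with
  | refl => exact Or.inl .refl
  | tail _ hbc ih =>
    obtain ⟨h, hh, hends⟩ := hbc
    by_cases hge : h = g
    · subst hge
      rw [hg] at hends
      rcases Sym2.eq_iff.mp hends with ⟨rfl, rfl⟩ | ⟨rfl, rfl⟩
      · exact Or.inr (Or.inr .refl)
      · exact Or.inr (Or.inl .refl)
    · have step : G.adjOff (insert g S) _ _ := ⟨h, by simp [hge, hh], hends⟩
      rcases ih with h1 | h1 | h1
      exacts [Or.inl (h1.tail step), Or.inr (Or.inl (h1.tail step)),
        Or.inr (Or.inr (h1.tail step))]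

lemma not_reach_endpoints {e f : G.E} {a b : G.V} (hea : G.ends e = s(a, b))
    (hf : G.connOff {f}) (hdisc : ¬ G.connOff {e, f}) :
    ¬ Relation.ReflTransGen (G.adjOff {e, f}) a b := by
  intro hab
  exact hdisc fun u v => lift hea hab (hf u v)

/-- For a properly disconnecting pair `{e,f}` with `ends e = s(a,b)`,
`ends f = s(c,d)`: reachability-to-`a` in `G - {e,f}` is crossed by both `e`
and `f`, and preserved along edges of `G - {e,f}`. -/
lemma pair_cross {e f : G.E} {a b c d : G.V}
    (hea : G.ends e = s(a, b)) (hfc : G.ends f = s(c, d))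
    (hce : G.connOff {e}) (hcf : G.connOff {f}) (hd : ¬ G.connOff {e, f}) :
    ¬ (Relation.ReflTransGen (G.adjOff {e, f}) a a ↔
        Relation.ReflTransGen (G.adjOff {e, f}) b a) ∧
    ¬ (Relation.ReflTransGen (G.adjOff {e, f}) c a ↔
        Relation.ReflTransGen (G.adjOff {e, f}) d a) := by
  have hab : ¬ Relation.ReflTransGen (G.adjOff {e, f}) a b :=
    not_reach_endpoints hea hcf hd
  have hcd : ¬ Relation.ReflTransGen (G.adjOff {e, f}) c d := by
    have : ¬ Relation.ReflTransGen (G.adjOff {f, e}) c d :=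
      not_reach_endpoints hfc hce (by rw [Set.pair_comm]; exact hd)
    rwa [Set.pair_comm] at this
  have hreach : Relation.ReflTransGen (G.adjOff {e, f}) c a ∨
      Relation.ReflTransGen (G.adjOff {e, f}) d a := by
    have := reach (S := {e}) hfc (hce c a)
    rw [show (insert f {e} : Set G.E) = {e, f} from Set.pair_comm f e] at this
    rcases this with h | h | h
    exacts [Or.inl h, Or.inl h, Or.inr h]
  constructor
  · intro hiff
    exact hab (rtg_symm (hiff.mp .refl))
  · intro hiff
    rcases hreach with h | h
    · exact hcd (h.trans (rtg_symm (hiff.mp h)))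
    · exact hcd ((hiff.mpr h).trans (rtg_symm h))

/-- Reachability classes are preserved along surviving edges. -/
lemma pres {S : Set G.E} {u v w : G.V} (h : G.adjOff S u v) :
    Relation.ReflTransGen (G.adjOff S) u w ↔ Relation.ReflTransGen (G.adjOff S) v w :=
  ⟨fun hu => (Relation.ReflTransGen.single (adjOff_symm h)).trans hu,
   fun hv => (Relation.ReflTransGen.single h).trans hv⟩

end FinMultigraph

/-- XOR-parity helpers. -/
lemma iff3_flip12 {p p' q q' r r' : Prop} (hp : ¬(p ↔ p')) (hq : ¬(q ↔ q')) (hr : r ↔ r') :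
    (p ↔ (q ↔ r)) ↔ (p' ↔ (q' ↔ r')) := by tauto

lemma iff3_flip23 {p p' q q' r r' : Prop} (hp : p ↔ p') (hq : ¬(q ↔ q')) (hr : ¬(r ↔ r')) :
    (p ↔ (q ↔ r)) ↔ (p' ↔ (q' ↔ r')) := by tauto

lemma iff3_pres {p p' q q' r r' : Prop} (hp : p ↔ p') (hq : q ↔ q') (hr : r ↔ r') :
    (p ↔ (q ↔ r)) ↔ (p' ↔ (q' ↔ r')) := by tauto

lemma iff3_extract {p p' q q' r r' : Prop} (h : (p ↔ (q ↔ r)) ↔ (p' ↔ (q' ↔ r')))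
    (hq : q ↔ q') (hr : r ↔ r') : p ↔ p' := by tauto

/-- If `e1,e2,e3,e4` are distinct non-bridge edges of a connected graph
such that `{e1,e2}`, `{e2,e3}`, `{e3,e4}` are disconnecting pairs, then so is `{e4,e1}`. -/
theorem disconnecting_pair_transitive (G : FinMultigraph) (hG : G.Connected)
    (e1 e2 e3 e4 : G.E)
    (h12ne : e1 ≠ e2) (h13ne : e1 ≠ e3) (h14ne : e1 ≠ e4)
    (h23ne : e2 ≠ e3) (h24ne : e2 ≠ e4) (h34ne : e3 ≠ e4)
    (hb1 : ¬ G.IsBridge e1) (hb2 : ¬ G.IsBridge e2)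
    (hb3 : ¬ G.IsBridge e3) (hb4 : ¬ G.IsBridge e4)
    (h12 : G.DiscPair e1 e2) (h23 : G.DiscPair e2 e3) (h34 : G.DiscPair e3 e4) :
    G.DiscPair e4 e1 := by
  rw [FinMultigraph.IsBridge, not_not] at hb1 hb2 hb3 hb4
  have hrep : ∀ z : Sym2 G.V, ∃ a b, z = s(a, b) := fun z =>
    z.ind (fun a b => ⟨a, b, rfl⟩)
  obtain ⟨a1, b1, h1⟩ := hrep (G.ends e1)
  obtain ⟨a2, b2, h2⟩ := hrep (G.ends e2)
  obtain ⟨a3, b3, h3⟩ := hrep (G.ends e3)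
  -- the three 2-colorings
  obtain ⟨a4, b4, h4⟩ := hrep (G.ends e4)
  obtain ⟨c12E, c12F⟩ := FinMultigraph.pair_cross h1 h2 hb1 hb2 h12
  obtain ⟨c23E, c23F⟩ := FinMultigraph.pair_cross h2 h3 hb2 hb3 h23
  obtain ⟨c34E, c34F⟩ := FinMultigraph.pair_cross h3 h4 hb3 hb4 h34
  -- the XOR of the three colorings
  set Phi : G.V → Prop := fun v =>
    (Relation.ReflTransGen (G.adjOff {e1, e2}) v a1 ↔
      (Relation.ReflTransGen (G.adjOff {e2, e3}) v a2 ↔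
        Relation.ReflTransGen (G.adjOff {e3, e4}) v a3)) with hPhi
  -- every edge surviving in G - {e4, e1} preserves Phi
  have key : ∀ u v : G.V, G.adjOff {e4, e1} u v → (Phi u ↔ Phi v) := by
    rintro u v ⟨h, hh, hends⟩
    simp only [Set.mem_insert_iff, Set.mem_singleton_iff, not_or] at hh
    simp only [hPhi]
    by_cases he2 : h = e2
    · rw [he2] at hends
      have hsw := Sym2.eq_iff.mp (h2.symm.trans hends)
      have p34 : Relation.ReflTransGen (G.adjOff {e3, e4}) u a3 ↔
          Relation.ReflTransGen (G.adjOff {e3, e4}) v a3 :=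
        FinMultigraph.pres ⟨e2, by simp [h23ne, h24ne], hends⟩
      have c12 : ¬ (Relation.ReflTransGen (G.adjOff {e1, e2}) u a1 ↔
          Relation.ReflTransGen (G.adjOff {e1, e2}) v a1) := by
        rcases hsw with ⟨rfl, rfl⟩ | ⟨rfl, rfl⟩
        · exact c12F
        · exact fun hi => c12F hi.symm
      have c23 : ¬ (Relation.ReflTransGen (G.adjOff {e2, e3}) u a2 ↔
          Relation.ReflTransGen (G.adjOff {e2, e3}) v a2) := by
        rcases hsw with ⟨rfl, rfl⟩ | ⟨rfl, rfl⟩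
        · exact c23E
        · exact fun hi => c23E hi.symm
      exact iff3_flip12 c12 c23 p34
    · by_cases he3 : h = e3
      · rw [he3] at hends
        have hsw := Sym2.eq_iff.mp (h3.symm.trans hends)
        have p12 : Relation.ReflTransGen (G.adjOff {e1, e2}) u a1 ↔
            Relation.ReflTransGen (G.adjOff {e1, e2}) v a1 :=
          FinMultigraph.pres ⟨e3, by simp [h13ne.symm, h23ne.symm], hends⟩
        have c23 : ¬ (Relation.ReflTransGen (G.adjOff {e2, e3}) u a2 ↔
            Relation.ReflTransGen (G.adjOff {e2, e3}) v a2) := by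
          rcases hsw with ⟨rfl, rfl⟩ | ⟨rfl, rfl⟩
          · exact c23F
          · exact fun hi => c23F hi.symm
        have c34 : ¬ (Relation.ReflTransGen (G.adjOff {e3, e4}) u a3 ↔
            Relation.ReflTransGen (G.adjOff {e3, e4}) v a3) := by
          rcases hsw with ⟨rfl, rfl⟩ | ⟨rfl, rfl⟩
          · exact c34E
          · exact fun hi => c34E hi.symm
        exact iff3_flip23 p12 c23 c34
      · have p12 : Relation.ReflTransGen (G.adjOff {e1, e2}) u a1 ↔
            Relation.ReflTransGen (G.adjOff {e1, e2}) v a1 :=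
          FinMultigraph.pres ⟨h, by simp [hh.2, he2], hends⟩
        have p23 : Relation.ReflTransGen (G.adjOff {e2, e3}) u a2 ↔
            Relation.ReflTransGen (G.adjOff {e2, e3}) v a2 :=
          FinMultigraph.pres ⟨h, by simp [he2, he3], hends⟩
        have p34 : Relation.ReflTransGen (G.adjOff {e3, e4}) u a3 ↔
            Relation.ReflTransGen (G.adjOff {e3, e4}) v a3 :=
          FinMultigraph.pres ⟨h, by simp [he3, hh.1], hends⟩
        exact iff3_pres p12 p23 p34
  intro hcon
  have inv : ∀ {u v : G.V}, Relation.ReflTransGen (G.adjOff {e4, e1}) u v →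
      (Phi u ↔ Phi v) := by
    intro u v h
    induction h with
    | refl => exact Iff.rfl
    | tail _ hbc ih => exact ih.trans (key _ _ hbc)
  have hwalk := inv (hcon a1 b1)
  have p23 : Relation.ReflTransGen (G.adjOff {e2, e3}) a1 a2 ↔
      Relation.ReflTransGen (G.adjOff {e2, e3}) b1 a2 :=
    FinMultigraph.pres ⟨e1, by simp [h12ne, h13ne], h1⟩
  have p34 : Relation.ReflTransGen (G.adjOff {e3, e4}) a1 a3 ↔
      Relation.ReflTransGen (G.adjOff {e3, e4}) b1 a3 :=
    FinMultigraph.pres ⟨e1, by simp [h13ne, h14ne], h1⟩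
  simp only [hPhi] at hwalk
  exact c12E (iff3_extract hwalk p23 p34)
end

section
/- The relation on non-bridge edges of a connected graph defined by 'e and f form a disconnecting pair or e = f' is an equivalence relation on the set of non-bridge edges. -/
open Relation

/-- A finite (multi)graph: finite vertex and edge types, each edge with an
unordered pair of endpoints. -/
structure MGraph where
  V : Type
  E : Type
  [fintV : Fintype V]
  [fintE : Fintype E]
  ends : E → Sym2 V

namespace MGraph

/-- Adjacency in the graph obtained by deleting the edges in `S`. -/
def adjOff (G : MGraph) (S : Set G.E) (u v : G.V) : Prop :=
  ∃ e : G.E, e ∉ S ∧ G.ends e = s(u, v)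

/-- The graph with the edges in `S` deleted is connected. -/
def connOff (G : MGraph) (S : Set G.E) : Prop :=
  ∀ u v : G.V, Relation.ReflTransGen (G.adjOff S) u v

/-- The graph is connected. -/
def Connected (G : MGraph) : Prop := G.connOff ∅

/-- An edge is a bridge if its removal disconnects the graph. -/
def IsBridge (G : MGraph) (e : G.E) : Prop := ¬ G.connOff {e}

/-- A pair of edges is a disconnecting pair if removing both disconnects the graph. -/
def DiscPair (G : MGraph) (e f : G.E) : Prop := ¬ G.connOff {e, f}

/-- Number of connected components after deleting the edges in `S`. -/
noncomputable def numComponentsOff (G : MGraph) (S : Set G.E) : ℕ :=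
  Nat.card (Quot (G.adjOff S))

end MGraph

lemma sym2_cases {V : Type} (z : Sym2 V) : ∃ x y, z = s(x, y) := by
  induction z using Sym2.ind with | _ x y => exact ⟨x, y, rfl⟩

lemma sym2_indep {V : Type} (A : Set V) {x y x' y' : V}
    (h : s(x, y) = s(x', y')) : (x ∈ A ↔ y ∈ A) ↔ (x' ∈ A ↔ y' ∈ A) := by
  rw [Sym2.eq_iff] at h
  rcases h with ⟨rfl, rfl⟩ | ⟨rfl, rfl⟩ <;> tauto

lemma xor_cross {p q r s : Prop} (h1 : ¬ (p ↔ q)) (h2 : ¬ (r ↔ s)) :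
    ¬ (p ↔ r) ↔ ¬ (q ↔ s) := by tauto

lemma xor_noncross {p q r s : Prop} (h1 : p ↔ q) (h2 : r ↔ s) :
    ¬ (p ↔ r) ↔ ¬ (q ↔ s) := by tauto

lemma xor_one {p q r s : Prop} (h1 : ¬ (p ↔ q)) (h2 : r ↔ s) :
    ¬ (¬ (p ↔ r) ↔ ¬ (q ↔ s)) := by tauto

lemma disconn_of_cut (G : MGraph) (S : Set G.E) (A : Set G.V) (u v : G.V)
    (hu : u ∈ A) (hv : v ∉ A)
    (hA : ∀ h ∉ S, ∀ x y, G.ends h = s(x, y) → (x ∈ A ↔ y ∈ A)) :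
    ¬ G.connOff S := by
  intro hc
  have key : ∀ a b : G.V, ReflTransGen (G.adjOff S) a b → (a ∈ A ↔ b ∈ A) := by
    intro a b hab
    induction hab with
    | refl => rfl
    | tail _ hstep ih =>
      obtain ⟨h, hS, hends⟩ := hstep
      exact ih.trans (hA h hS _ _ hends)
  exact hv ((key u v (hc u v)).mp hu)

lemma cut_of_not_connOff (G : MGraph) (S : Set G.E) (h : ¬ G.connOff S) :
    ∃ A : Set G.V, (∃ u, u ∈ A) ∧ (∃ v, v ∉ A) ∧
      ∀ h ∉ S, ∀ x y, G.ends h = s(x, y) → (x ∈ A ↔ y ∈ A) := by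
  rw [MGraph.connOff] at h
  push_neg at h
  obtain ⟨u, v, huv⟩ := h
  refine ⟨{w | ReflTransGen (G.adjOff S) u w}, ⟨u, ReflTransGen.refl⟩, ⟨v, huv⟩, ?_⟩
  intro h hS x y hends
  constructor
  · intro hx; exact hx.tail ⟨h, hS, hends⟩
  · intro hy; exact hy.tail ⟨h, hS, by rw [hends, Sym2.eq_swap]⟩

/-- On the non-bridge edges of a connected graph, the relation
"`e = f` or `{e,f}` is a disconnecting pair" is an equivalence relation. -/
theorem discPair_equivalence (G : MGraph) (hG : G.Connected) :
    Equivalence (fun e f : {e : G.E // ¬ G.IsBridge e} =>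
      e = f ∨ G.DiscPair e.1 f.1) := by
  constructor
  · intro e; exact Or.inl rfl
  · intro e f h
    rcases h with h | h
    · exact Or.inl h.symm
    · refine Or.inr ?_
      unfold MGraph.DiscPair at h ⊢
      rwa [Set.pair_comm]
  · intro e f g hef hfg
    rcases hef with rfl | hef
    · exact hfg
    rcases hfg with rfl | hfg
    · exact Or.inr hef
    by_cases heg : e = g
    · exact Or.inl heg
    refine Or.inr ?_
    have hef' : e.1 ≠ f.1 := by
      intro h
      apply e.2
      have hpair : ({e.1, f.1} : Set G.E) = {e.1} := by rw [← h]; simp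
      unfold MGraph.IsBridge
      rw [← hpair]
      exact hef
    have hfg' : f.1 ≠ g.1 := by
      intro h
      apply f.2
      have hpair : ({f.1, g.1} : Set G.E) = {f.1} := by rw [← h]; simp
      unfold MGraph.IsBridge
      rw [← hpair]
      exact hfg
    have heg' : e.1 ≠ g.1 := fun h => heg (Subtype.ext h)
    obtain ⟨A, ⟨uA, huA⟩, ⟨vA, hvA⟩, hA⟩ := cut_of_not_connOff G _ hef
    obtain ⟨B, ⟨uB, huB⟩, ⟨vB, hvB⟩, hB⟩ := cut_of_not_connOff G _ hfg
    obtain ⟨ex, ey, hE⟩ := sym2_cases (G.ends e.1)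
    obtain ⟨fx, fy, hF⟩ := sym2_cases (G.ends f.1)
    obtain ⟨gx, gy, hGg⟩ := sym2_cases (G.ends g.1)
    -- e crosses A
    have crAe : ¬ (ex ∈ A ↔ ey ∈ A) := by
      intro hcon
      apply f.2
      refine disconn_of_cut G {f.1} A uA vA huA hvA ?_
      intro h hS x y hends
      by_cases he : h = e.1
      · subst he
        exact (sym2_indep A (hE.symm.trans hends)).mp hcon
      · refine hA h ?_ x y hends
        simp only [Set.mem_singleton_iff] at hS
        simp only [Set.mem_insert_iff, Set.mem_singleton_iff]
        tauto
    -- f crosses A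
    have crAf : ¬ (fx ∈ A ↔ fy ∈ A) := by
      intro hcon
      apply e.2
      refine disconn_of_cut G {e.1} A uA vA huA hvA ?_
      intro h hS x y hends
      by_cases hf : h = f.1
      · subst hf
        exact (sym2_indep A (hF.symm.trans hends)).mp hcon
      · refine hA h ?_ x y hends
        simp only [Set.mem_singleton_iff] at hS
        simp only [Set.mem_insert_iff, Set.mem_singleton_iff]
        tauto
    -- f crosses B
    have crBf : ¬ (fx ∈ B ↔ fy ∈ B) := by
      intro hcon
      apply g.2
      refine disconn_of_cut G {g.1} B uB vB huB hvB ?_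
      intro h hS x y hends
      by_cases hf : h = f.1
      · subst hf
        exact (sym2_indep B (hF.symm.trans hends)).mp hcon
      · refine hB h ?_ x y hends
        simp only [Set.mem_singleton_iff] at hS
        simp only [Set.mem_insert_iff, Set.mem_singleton_iff]
        tauto
    -- e does not cross B
    have ncBe : ex ∈ B ↔ ey ∈ B := by
      refine hB e.1 ?_ ex ey hE
      simp only [Set.mem_insert_iff, Set.mem_singleton_iff]
      tauto
    -- the symmetric difference cut
    set C : Set G.V := {x | ¬ (x ∈ A ↔ x ∈ B)} with hC
    have hcutC : ∀ h ∉ ({e.1, g.1} : Set G.E), ∀ x y,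
        G.ends h = s(x, y) → (x ∈ C ↔ y ∈ C) := by
      intro h hS x y hends
      simp only [Set.mem_insert_iff, Set.mem_singleton_iff] at hS
      push_neg at hS
      by_cases hf : h = f.1
      · subst hf
        have h1 : ¬ (x ∈ A ↔ y ∈ A) :=
          fun hc => crAf ((sym2_indep A (hF.symm.trans hends)).mpr hc)
        have h2 : ¬ (x ∈ B ↔ y ∈ B) :=
          fun hc => crBf ((sym2_indep B (hF.symm.trans hends)).mpr hc)
        simp only [hC, Set.mem_setOf_eq]
        exact xor_cross h1 h2
      · have h1 : x ∈ A ↔ y ∈ A := by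
          refine hA h ?_ x y hends
          simp only [Set.mem_insert_iff, Set.mem_singleton_iff]
          tauto
        have h2 : x ∈ B ↔ y ∈ B := by
          refine hB h ?_ x y hends
          simp only [Set.mem_insert_iff, Set.mem_singleton_iff]
          tauto
        simp only [hC, Set.mem_setOf_eq]
        exact xor_noncross h1 h2
    have crCe : ¬ (ex ∈ C ↔ ey ∈ C) := by
      simp only [hC, Set.mem_setOf_eq]
      exact xor_one crAe ncBe
    by_cases hx : ex ∈ C
    · have hy : ey ∉ C := fun h => crCe ⟨fun _ => h, fun _ => hx⟩
      exact disconn_of_cut G _ C ex ey hx hy hcutC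
    · have hy : ey ∈ C := by
        by_contra h
        exact crCe (iff_of_false hx h)
      exact disconn_of_cut G _ C ey ex hy hx hcutC
end
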